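/- arXiv:0803.3096 — 2 statements merged into one kernel-verified Lean document; each statement's English description precedes it below -/
import Mathlib

section
/- Private state construction used in the proof of Theorem 2: Let {|x̃⟩}_{x=0}^{d−1} be a conjugate basis of ℂ^d with |x̃⟩ = (1/√d) ∑_k e^{iθ_{xk}} |k⟩, let |η_x⟩ for x = 0,…,d−1 be arbitrary (not necessarily normalized) vectors in a space S', and let {|x⟩^T}_{x=0}^{d−1} be the standard basis of ℂ^d. If the vector |ψ⟩ := ∑_{x=0}^{d−1} (1/√d) ∑_{k=0}^{d−1} e^{iθ_{xk}} |k⟩^A |k⟩^B ⊗ |η_x⟩^{S'} ⊗ |x⟩^T has unit norm, then |ψ⟩⟨ψ| is an exact private state of key size d with key systems A, B and shield S'⊗T; in particular, the twisting operator W^{BT} := ∑_{k,x} e^{−iθ_{xk}} P_k^B ⊗ P_x^T maps |ψ⟩ to |Φ_d⟩^{AB} ⊗ |χ⟩^{S'T} for some unit vector |χ⟩. -/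
open Matrix Complex BigOperators Finset
open Kronecker
open scoped ComplexOrder

noncomputable section

/-- ρ is a density operator: positive semidefinite with unit trace. -/
def IsDensity {ι : Type*} [Fintype ι] (ρ : Matrix ι ι ℂ) : Prop :=
  ρ.PosSemidef ∧ ρ.trace = 1

/-- A POVM indexed by `μ` on a system with index set `ι`. -/
def IsPOVM {μ ι : Type*} [Fintype μ] [Fintype ι] [DecidableEq ι]
    (Λ : μ → Matrix ι ι ℂ) : Prop :=
  (∀ m, (Λ m).PosSemidef) ∧ ∑ m, Λ m = 1

/-- Projector |k⟩⟨k| onto a standard basis element. -/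
def stdProj {ι : Type*} [DecidableEq ι] (k : ι) : Matrix ι ι ℂ :=
  Matrix.single k k 1

/-- The standard basis vector |k⟩. -/
def stdVec {ι : Type*} [DecidableEq ι] (k : ι) : ι → ℂ :=
  fun i => if i = k then 1 else 0

/-- Trace norm Tr √(MᴴM). -/
def traceNorm {ι : Type*} [Fintype ι] [DecidableEq ι] (M : Matrix ι ι ℂ) : ℝ :=
  ((Matrix.posSemidef_conjTranspose_mul_self M).1.eigenvectorUnitary.1 *
    Matrix.diagonal (((↑) : ℝ → ℂ) ∘ (√·) ∘ (Matrix.posSemidef_conjTranspose_mul_self M).1.eigenvalues) *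
    (star (Matrix.posSemidef_conjTranspose_mul_self M).1.eigenvectorUnitary : Matrix ι ι ℂ)).trace.re

def negMulLog2 (x : ℝ) : ℝ := -(x * Real.logb 2 x)

/-- Shannon entropy in bits. -/
def shannon {α : Type*} [Fintype α] (p : α → ℝ) : ℝ := ∑ a, negMulLog2 (p a)

/-- Conditional Shannon entropy (in bits) of the first component given the second. -/
def condEnt {α β : Type*} [Fintype α] [Fintype β] (p : α × β → ℝ) : ℝ :=
  shannon p - shannon (fun b => ∑ a, p (a, b))

/-- Element |x̃⟩ = (1/√d) ∑ₖ e^{iθₓₖ}|k⟩ of a candidate conjugate basis. -/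
def conjVec (d : ℕ) (θ : Fin d → Fin d → ℝ) (x : Fin d) : Fin d → ℂ :=
  fun k => (Real.sqrt d : ℂ)⁻¹ * Complex.exp (Complex.I * (θ x k : ℂ))

/-- The family of phases θ defines a conjugate (orthonormal) basis. -/
def IsConjBasis (d : ℕ) (θ : Fin d → Fin d → ℝ) : Prop :=
  ∀ x y : Fin d, (∑ k, star (conjVec d θ x k) * conjVec d θ y k) = if x = y then 1 else 0

/-- Projector P̃ₓ = |x̃⟩⟨x̃|. -/
def conjProj (d : ℕ) (θ : Fin d → Fin d → ℝ) (x : Fin d) : Matrix (Fin d) (Fin d) ℂ :=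
  Matrix.vecMulVec (conjVec d θ x) (star (conjVec d θ x))

/-- The canonical maximally entangled vector |Φ_d⟩. -/
def maxEntVec (d : ℕ) : Fin d × Fin d → ℂ :=
  fun P => if P.1 = P.2 then (Real.sqrt d : ℂ)⁻¹ else 0

/-- Density operator of the canonical maximally entangled state Φ_d. -/
def maxEnt (d : ℕ) : Matrix (Fin d × Fin d) (Fin d × Fin d) ℂ :=
  Matrix.vecMulVec (maxEntVec d) (star (maxEntVec d))

/-- Twisting operator U = ∑ⱼₖ Pⱼ ⊗ Pₖ ⊗ Vⱼₖ. -/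
def IsTwisting {d : ℕ} {σ : Type*} [Fintype σ] [DecidableEq σ]
    (U : Matrix (Fin d × (Fin d × σ)) (Fin d × (Fin d × σ)) ℂ) : Prop :=
  ∃ V : Fin d → Fin d → Matrix σ σ ℂ,
    (∀ j k, V j k ∈ Matrix.unitaryGroup σ ℂ) ∧
    U = ∑ j, ∑ k, stdProj j ⊗ₖ (stdProj k ⊗ₖ V j k)

/-- Exact private state γ = U(Φ_d ⊗ ξ)U†. -/
def IsExactPrivate {d : ℕ} {σ : Type*} [Fintype σ] [DecidableEq σ]
    (γ : Matrix (Fin d × (Fin d × σ)) (Fin d × (Fin d × σ)) ℂ) : Prop :=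
  ∃ (U : Matrix (Fin d × (Fin d × σ)) (Fin d × (Fin d × σ)) ℂ) (ξ : Matrix σ σ ℂ),
    IsTwisting U ∧ IsDensity ξ ∧
    γ = U * (Matrix.reindex (Equiv.prodAssoc (Fin d) (Fin d) σ)
      (Equiv.prodAssoc (Fin d) (Fin d) σ) (maxEnt d ⊗ₖ ξ)) * Uᴴ

/-- ε-secret key: within trace distance 2ε of a perfect secret key state. -/
def IsSecretKey (ε : ℝ) {ι ηE : Type*} [Fintype ι] [DecidableEq ι] [Fintype ηE] [DecidableEq ηE]
    (ρ : Matrix (ι × (ι × ηE)) (ι × (ι × ηE)) ℂ) : Prop :=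
  ∃ ρE : Matrix ηE ηE ℂ, IsDensity ρE ∧
    traceNorm (ρ - (Fintype.card ι : ℂ)⁻¹ • ∑ k, stdProj k ⊗ₖ (stdProj k ⊗ₖ ρE)) ≤ 2 * ε

/-- Standard-basis key measurement on systems A and B. -/
def keyMeasured {ι ηE : Type*} [Fintype ι] [DecidableEq ι] [Fintype ηE] [DecidableEq ηE]
    (ρ : Matrix (ι × (ι × ηE)) (ι × (ι × ηE)) ℂ) : Matrix (ι × (ι × ηE)) (ι × (ι × ηE)) ℂ :=
  ∑ j, ∑ k, (stdProj j ⊗ₖ (stdProj k ⊗ₖ (1 : Matrix ηE ηE ℂ))) * ρ *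
    (stdProj j ⊗ₖ (stdProj k ⊗ₖ (1 : Matrix ηE ηE ℂ)))

/-- ε-private state: some (equivalently, every) purification yields an ε-secret key
upon standard-basis key measurement. -/
def IsEpsPrivate (ε : ℝ) {ι σ : Type*} [Fintype ι] [DecidableEq ι] [Fintype σ] [DecidableEq σ]
    (ψ : Matrix (ι × (ι × σ)) (ι × (ι × σ)) ℂ) : Prop :=
  ∃ (dE : ℕ) (v : ι × (ι × (σ × Fin dE)) → ℂ),
    (∀ P Q : ι × (ι × σ),
      (∑ e, v (P.1, (P.2.1, (P.2.2, e))) * star (v (Q.1, (Q.2.1, (Q.2.2, e))))) = ψ P Q) ∧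
    IsSecretKey ε (keyMeasured (Matrix.of fun P Q : ι × (ι × Fin dE) =>
      ∑ s : σ, v (P.1, (P.2.1, (s, P.2.2))) * star (v (Q.1, (Q.2.1, (s, Q.2.2))))))

/-- ε-private state when the eavesdropper additionally holds a public classical register. -/
def IsEpsPrivateGivenPublic (ε : ℝ) {ι σ μR : Type*}
    [Fintype ι] [DecidableEq ι] [Fintype σ] [DecidableEq σ] [Fintype μR] [DecidableEq μR]
    (ψ : Matrix ((ι × (ι × σ)) × μR) ((ι × (ι × σ)) × μR) ℂ) : Prop :=
  ∃ (dE : ℕ) (v : ((ι × (ι × σ)) × μR) × Fin dE → ℂ),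
    (∀ P Q, (∑ e, v (P, e) * star (v (Q, e))) = ψ P Q) ∧
    IsSecretKey ε (keyMeasured (Matrix.of fun P Q : ι × (ι × (μR × Fin dE)) =>
      ∑ s : σ, v (((P.1, (P.2.1, s)), P.2.2.1), P.2.2.2) *
        star (v (((Q.1, (Q.2.1, s)), Q.2.2.1), Q.2.2.2))))

open Classical in
/-- Von Neumann entropy in bits (via eigenvalues; zero on non-Hermitian input). -/
def vonNeumann {ι : Type*} [Fintype ι] [DecidableEq ι] (ρ : Matrix ι ι ℂ) : ℝ :=
  if h : ρ.IsHermitian then ∑ i, negMulLog2 (h.eigenvalues i) else 0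

/-- Unnormalized conditional state on β given measurement of the vector u on ι. -/
def condStateVec {ι β : Type*} [Fintype ι] (u : ι → ℂ)
    (ρ : Matrix (ι × β) (ι × β) ℂ) : Matrix β β ℂ :=
  Matrix.of fun w w' => ∑ a, ∑ a', star (u a) * ρ (a, w) (a', w') * u a'

/-- Outcome probability of the measurement vector u. -/
def measProb {ι β : Type*} [Fintype ι] [Fintype β] (u : ι → ℂ)
    (ρ : Matrix (ι × β) (ι × β) ℂ) : ℝ := (condStateVec u ρ).trace.re

/-- Holevo quantity of the ensemble induced on β by measuring the basis family W on ι. -/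
def holevoB {ι β κm : Type*} [Fintype ι] [Fintype β] [DecidableEq β] [Fintype κm]
    (W : κm → ι → ℂ) (ρ : Matrix (ι × β) (ι × β) ℂ) : ℝ :=
  vonNeumann (∑ x, condStateVec (W x) ρ) -
    ∑ x, measProb (W x) ρ *
      vonNeumann ((((condStateVec (W x) ρ).trace)⁻¹) • condStateVec (W x) ρ)

open Classical in
/-- Positive-semidefinite square root (zero on non-PSD input). -/
def psqrt {ι : Type*} [Fintype ι] [DecidableEq ι] (M : Matrix ι ι ℂ) : Matrix ι ι ℂ :=
  if h : M.PosSemidef then h.1.eigenvectorUnitary.1 *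
    Matrix.diagonal (((↑) : ℝ → ℂ) ∘ (√·) ∘ h.1.eigenvalues) *
    (star h.1.eigenvectorUnitary : Matrix ι ι ℂ) else 0

/-- n-fold tensor (Kronecker) product of a family of matrices. -/
def tensorPow {dB : ℕ} {n : ℕ} (φ : Fin n → Matrix (Fin dB) (Fin dB) ℂ) :
    Matrix (Fin n → Fin dB) (Fin n → Fin dB) ℂ :=
  Matrix.of fun w w' => ∏ i, φ i (w i) (w' i)

/-- n-fold tensor power of a bipartite state, grouped as (Aⁿ) × (Bⁿ). -/
def tpow {α β : Type*} (ψ : Matrix (α × β) (α × β) ℂ) (n : ℕ) :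
    Matrix ((Fin n → α) × (Fin n → β)) ((Fin n → α) × (Fin n → β)) ℂ :=
  Matrix.of fun P Q => ∏ i, ψ (P.1 i, P.2 i) (Q.1 i, Q.2 i)

/-- Output of a one-way protocol with Alice-instrument Kraus operators E and Bob isometries V;
the classical message is kept in a public register. -/
def protoOut {𝒜 ℬ 𝒜' ℬ' M κI : Type*} [Fintype 𝒜] [Fintype ℬ] [Fintype 𝒜'] [Fintype ℬ']
    [Fintype κI] [DecidableEq M]
    (E : M → κI → Matrix 𝒜' 𝒜 ℂ) (V : M → Matrix ℬ' ℬ ℂ)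
    (ρ : Matrix (𝒜 × ℬ) (𝒜 × ℬ) ℂ) : Matrix ((𝒜' × ℬ') × M) ((𝒜' × ℬ') × M) ℂ :=
  Matrix.of fun P Q =>
    if P.2 = Q.2 then
      (∑ i, ((E P.2 i ⊗ₖ V P.2) * ρ * (E P.2 i ⊗ₖ V P.2)ᴴ)) P.1 Q.1
    else 0

/-- Partial trace over the innermost factor. -/
def ptraceInner {α β γ : Type*} [Fintype γ] (M : Matrix (α × (β × γ)) (α × (β × γ)) ℂ) :
    Matrix (α × β) (α × β) ℂ :=
  Matrix.of fun P Q => ∑ c, M (P.1, (P.2, c)) (Q.1, (Q.2, c))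

/-- Partial trace over the first factor. -/
def ptraceL {α β : Type*} [Fintype α] (M : Matrix (α × β) (α × β) ℂ) : Matrix β β ℂ :=
  Matrix.of fun b b' => ∑ a, M (a, b) (a, b')
/-- Dot product of dit strings. -/
def zdot {d n : ℕ} (x y : Fin n → ZMod d) : ZMod d := ∑ a, x a * y a

/-- Syndrome map defined by a family of stabilizer strings. -/
def synMap {d n m : ℕ} (s : Fin m → (Fin n → ZMod d)) (k : Fin n → ZMod d) : Fin m → ZMod d :=
  fun i => zdot (s i) k

/-- Fourier (conjugate) basis vector |x̃⟩ on n qudits, with ω = e^{2πi/d}. -/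
def fourierVec (d n : ℕ) (x : Fin n → ZMod d) : (Fin n → ZMod d) → ℂ :=
  fun k => (Real.sqrt (d ^ n) : ℂ)⁻¹ *
    Complex.exp (2 * Real.pi * Complex.I / d) ^ (zdot x k).val

/-- Fourier basis projector P̃ₓ. -/
def fourierProj (d n : ℕ) (x : Fin n → ZMod d) :
    Matrix (Fin n → ZMod d) (Fin n → ZMod d) ℂ :=
  Matrix.vecMulVec (fourierVec d n x) (star (fourierVec d n x))

/-- Projector onto the span of standard basis vectors with a given classical label. -/
def classProj {K μ : Type*} [Fintype K] [DecidableEq K] [DecidableEq μ] (f : K → μ) (a : μ) :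
    Matrix K K ℂ := ∑ k, if f k = a then stdProj k else 0

/-- Projector Π̃_β onto the span of Fourier basis vectors with phase syndrome β. -/
def phaseProj (d n mx : ℕ) [NeZero d] (t : Fin mx → (Fin n → ZMod d)) (b : Fin mx → ZMod d) :
    Matrix (Fin n → ZMod d) (Fin n → ZMod d) ℂ :=
  ∑ x, if synMap t x = b then fourierProj d n x else 0

/-- The purification vector ∑ₖ √pₖ |k⟩|φₖ⟩. -/
def purVec {K W : Type*} (p : K → ℝ) (φ : K → W → ℂ) : K × W → ℂ :=
  fun P => (Real.sqrt (p P.1) : ℂ) * φ P.1 P.2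

/-- Reduced state on A ⊗ B of the pure state with amplitudes v on A ⊗ (B ⊗ (S ⊗ E)). -/
def redAB {K : Type*} {dB dS dE : ℕ} (v : K × (Fin dB × (Fin dS × Fin dE)) → ℂ) :
    Matrix (K × Fin dB) (K × Fin dB) ℂ :=
  Matrix.of fun P Q => ∑ sS : Fin dS, ∑ e : Fin dE,
    v (P.1, (P.2, (sS, e))) * star (v (Q.1, (Q.2, (sS, e))))

/-- Reduced state on A ⊗ B ⊗ S of the pure state with amplitudes v on A ⊗ (B ⊗ (S ⊗ E)). -/
def redABS {K : Type*} {dB dS dE : ℕ} (v : K × (Fin dB × (Fin dS × Fin dE)) → ℂ) :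
    Matrix (K × (Fin dB × Fin dS)) (K × (Fin dB × Fin dS)) ℂ :=
  Matrix.of fun P Q => ∑ e : Fin dE,
    v (P.1, (P.2.1, (P.2.2, e))) * star (v (Q.1, (Q.2.1, (Q.2.2, e))))

/-- The post-measurement vector |Ψ₂⟩ = ∑_{α,β,k} (Π_α Π̃_β ⊗ √Λ_{α,k} ⊗ 1)|Ψ⟩|k⟩^{B₂}|α⟩^R|β⟩^T,
with index grouping A × ((B × (S × E)) × (B₂ × (R × T))). -/
def oneShotVec {d n mz mx : ℕ} [NeZero d] {dB dS dE : ℕ}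
    (s : Fin mz → (Fin n → ZMod d)) (t : Fin mx → (Fin n → ZMod d))
    (Λ : (Fin mz → ZMod d) → (Fin n → ZMod d) → Matrix (Fin dB) (Fin dB) ℂ)
    (v : (Fin n → ZMod d) × (Fin dB × (Fin dS × Fin dE)) → ℂ) :
    (Fin n → ZMod d) × ((Fin dB × (Fin dS × Fin dE)) ×
      ((Fin n → ZMod d) × ((Fin mz → ZMod d) × (Fin mx → ZMod d)))) → ℂ :=
  fun P =>
    ∑ a' : Fin n → ZMod d, ∑ b' : Fin dB,
      ((classProj (synMap s) P.2.2.2.1 * phaseProj d n mx t P.2.2.2.2) P.1 a') *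
      (psqrt (Λ P.2.2.2.1 P.2.2.1) P.2.1.1 b') *
      v (a', (b', P.2.1.2))

/-- The ccq state obtained from |Ψ₂⟩ by measuring the logical values λ on A and on B₂
(recording them in registers Ā and B̄), and tracing out A, B, S, B₂ and T.
Eve keeps E and the public register R. -/
def oneShotOut {d n mz mx r : ℕ} [NeZero d] {dB dS dE : ℕ}
    (u : Fin r → (Fin n → ZMod d))
    (Ψ2 : (Fin n → ZMod d) × ((Fin dB × (Fin dS × Fin dE)) ×
      ((Fin n → ZMod d) × ((Fin mz → ZMod d) × (Fin mx → ZMod d)))) → ℂ) :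
    Matrix ((Fin r → ZMod d) × ((Fin r → ZMod d) × (Fin dE × (Fin mz → ZMod d))))
           ((Fin r → ZMod d) × ((Fin r → ZMod d) × (Fin dE × (Fin mz → ZMod d)))) ℂ :=
  Matrix.of fun P Q =>
    if P.1 = Q.1 ∧ P.2.1 = Q.2.1 then
      ∑ a : Fin n → ZMod d, ∑ k2 : Fin n → ZMod d, ∑ b : Fin dB,
        ∑ sS : Fin dS, ∑ βr : Fin mx → ZMod d,
        (if synMap u a = P.1 ∧ synMap u k2 = P.2.1 then
          Ψ2 (a, ((b, (sS, P.2.2.1)), (k2, (P.2.2.2, βr)))) *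
          star (Ψ2 (a, ((b, (sS, Q.2.2.1)), (k2, (Q.2.2.2, βr)))))
        else 0)
    else 0

/-- |Ψ₂⟩ = ∑_{k,ℓ} √pₖ |k⟩(√Λ_ℓ ⊗ 1)|φₖ⟩|ℓ⟩: coherent measurement of the POVM Λ. -/
def coherentMeasVec {N dB dE : ℕ} (p : Fin N → ℝ) (φ : Fin N → (Fin dB × Fin dE) → ℂ)
    (Λ : Fin N → Matrix (Fin dB) (Fin dB) ℂ) : Fin N × ((Fin dB × Fin dE) × Fin N) → ℂ :=
  fun P => (Real.sqrt (p P.1) : ℂ) * ∑ b', psqrt (Λ P.2.2) P.2.1.1 b' * φ P.1 (b', P.2.1.2)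

/-- |Ψ₂'⟩ = ∑ₖ √pₖ |k⟩|φₖ⟩|k⟩: perfect copy of the index k. -/
def copyVec {N dB dE : ℕ} (p : Fin N → ℝ) (φ : Fin N → (Fin dB × Fin dE) → ℂ) :
    Fin N × ((Fin dB × Fin dE) × Fin N) → ℂ :=
  fun P => if P.2.2 = P.1 then (Real.sqrt (p P.1) : ℂ) * φ P.1 P.2.1 else 0

lemma aux_conj_vecMulVec {n m : Type*} [Fintype n] [Fintype m] (A : Matrix m n ℂ) (u : n → ℂ) :
    A * Matrix.vecMulVec u (star u) * Aᴴ =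
      Matrix.vecMulVec (A.mulVec u) (star (A.mulVec u)) := by
  ext P Q
  simp only [Matrix.mul_apply, Matrix.vecMulVec_apply, Matrix.conjTranspose_apply,
    Matrix.mulVec, dotProduct, Pi.star_apply, star_sum, star_mul']
  rw [Finset.sum_mul_sum]
  rw [Finset.sum_comm]
  refine Finset.sum_congr rfl fun j _ => ?_
  rw [Finset.sum_mul]
  refine Finset.sum_congr rfl fun i _ => ?_
  ring

lemma aux_vecMulVec_posSemidef {n : Type*} [Fintype n] (u : n → ℂ) :
    (Matrix.vecMulVec u (star u)).PosSemidef := by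
  refine Matrix.PosSemidef.of_dotProduct_mulVec_nonneg ?_ ?_
  · ext i j
    simp [Matrix.conjTranspose_apply, Matrix.vecMulVec_apply, mul_comm]
  · intro x
    have : star x ⬝ᵥ (Matrix.vecMulVec u (star u)).mulVec x
        = star (∑ i, star (x i) * u i) * (∑ i, star (x i) * u i) := by
      simp only [dotProduct, Matrix.mulVec, Matrix.vecMulVec_apply, Pi.star_apply,
        star_sum, star_mul', star_star]
      rw [Finset.sum_mul_sum, Finset.sum_comm]
      refine Finset.sum_congr rfl fun i _ => ?_
      rw [Finset.mul_sum]
      refine Finset.sum_congr rfl fun j _ => ?_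
      ring
    rw [this]
    exact star_mul_self_nonneg _

lemma aux_kron3_apply {d : ℕ} {σ : Type*} [Fintype σ] [DecidableEq σ]
    (V : Fin d → Fin d → Matrix σ σ ℂ) (a a' b b' : Fin d) (z z' : σ) :
    (∑ j, ∑ k, stdProj j ⊗ₖ (stdProj k ⊗ₖ V j k)) (a,(b,z)) (a',(b',z'))
      = if a = a' ∧ b = b' then V a b z z' else 0 := by
  simp only [Matrix.sum_apply, Matrix.kroneckerMap_apply, stdProj, Matrix.single,
    Matrix.of_apply]
  rw [Finset.sum_eq_single a]
  · rw [Finset.sum_eq_single b]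
    · by_cases h1 : a = a' <;> by_cases h2 : b = b' <;> simp [h1, h2]
    · intro k _ hk; simp [hk]
    · simp
  · intro j _ hj
    have : ¬(j = a ∧ j = a') := fun h => hj h.1
    rw [if_neg this]; simp
  · simp

lemma aux_W_apply {d dS' : ℕ} (e : Fin d → Fin d → ℂ)
    (a a' b b' : Fin d) (s s' : Fin dS') (x x' : Fin d) :
    (∑ k : Fin d, ∑ t : Fin d, e k t •
        ((1 : Matrix (Fin d) (Fin d) ℂ) ⊗ₖ (stdProj k ⊗ₖ
          ((1 : Matrix (Fin dS') (Fin dS') ℂ) ⊗ₖ stdProj t))))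
      (a,(b,(s,x))) (a',(b',(s',x')))
      = if a = a' ∧ b = b' ∧ s = s' ∧ x = x' then e b x else 0 := by
  simp only [Matrix.sum_apply, Matrix.smul_apply, Matrix.kroneckerMap_apply, stdProj,
    Matrix.single, Matrix.of_apply, Matrix.one_apply, smul_eq_mul]
  rw [Finset.sum_eq_single b]
  · rw [Finset.sum_eq_single x]
    · by_cases h1 : a = a' <;> by_cases h2 : b = b' <;> by_cases h3 : s = s'
        <;> by_cases h4 : x = x' <;> simp [h1, h2, h3, h4]
    · intro t _ ht
      have : ¬(t = x ∧ t = x') := fun h => ht h.1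
      rw [if_neg this]; simp
    · simp
  · intro k _ hk
    have : ¬(k = b ∧ k = b') := fun h => hk h.1
    rw [if_neg this]; simp
  · simp

/-- **Private state construction used in the proof of Theorem 2.**
If |ψ⟩ = ∑ₓ (1/√d) ∑ₖ e^{iθₓₖ}|k⟩^A|k⟩^B ⊗ |ηₓ⟩^{S'} ⊗ |x⟩^T is a unit vector, then
|ψ⟩⟨ψ| is an exact private state of key size d with shield S' ⊗ T; in particular the
twisting operator W^{BT} = ∑ₖₓ e^{-iθₓₖ} Pₖ^B ⊗ Pₓ^T maps |ψ⟩ to |Φ_d⟩ ⊗ |χ⟩ for some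
unit vector |χ⟩. -/
theorem private_state_construction
    {d dS' : ℕ} (hd : 0 < d)
    (θ : Fin d → Fin d → ℝ) (hθ : IsConjBasis d θ)
    (η : Fin d → Fin dS' → ℂ)
    (ψv : Fin d × (Fin d × (Fin dS' × Fin d)) → ℂ)
    (hψv : ∀ P, ψv P = if P.1 = P.2.1 then
        (Real.sqrt d : ℂ)⁻¹ * Complex.exp (Complex.I * (θ P.2.2.2 P.1 : ℂ)) *
          η P.2.2.2 P.2.2.1
      else 0)
    (hnorm : ∑ P, Complex.normSq (ψv P) = 1) :
    IsExactPrivate (Matrix.vecMulVec ψv (star ψv)) ∧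
    ∃ χ : Fin dS' × Fin d → ℂ, (∑ z, Complex.normSq (χ z) = 1) ∧
      Matrix.mulVec
        (∑ k : Fin d, ∑ x : Fin d, Complex.exp (-(Complex.I * (θ x k : ℂ))) •
          ((1 : Matrix (Fin d) (Fin d) ℂ) ⊗ₖ
            (stdProj k ⊗ₖ ((1 : Matrix (Fin dS') (Fin dS') ℂ) ⊗ₖ stdProj x))))
        ψv
      = fun P => maxEntVec d (P.1, P.2.1) * χ P.2.2 := by

  classical
  set χ : Fin dS' × Fin d → ℂ := fun z => η z.2 z.1 with hχdef
  have hdR : (0:ℝ) < d := by exact_mod_cast hd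
  have hnsq : ∀ (x k : Fin d) (c : ℂ),
      Complex.normSq ((Real.sqrt d : ℂ)⁻¹ * Complex.exp (Complex.I * (θ x k : ℂ)) * c)
        = (d:ℝ)⁻¹ * Complex.normSq c := by
    intro x k c
    rw [Complex.normSq_mul, Complex.normSq_mul, Complex.normSq_inv, Complex.normSq_ofReal,
      Real.mul_self_sqrt (le_of_lt hdR)]
    have : Complex.normSq (Complex.exp (Complex.I * (θ x k : ℂ))) = 1 := by
      rw [Complex.normSq_eq_norm_sq, Complex.norm_exp]
      simp
    rw [this, mul_one]
  have hχnorm : ∑ z : Fin dS' × Fin d, Complex.normSq (χ z) = 1 := by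
    have h1 : ∑ P, Complex.normSq (ψv P)
        = (d:ℝ) * ((d:ℝ)⁻¹ * ∑ z : Fin dS' × Fin d, Complex.normSq (χ z)) := by
      rw [Fintype.sum_prod_type]
      have hinner : ∀ a : Fin d, ∑ Q : Fin d × (Fin dS' × Fin d), Complex.normSq (ψv (a, Q))
          = (d:ℝ)⁻¹ * ∑ z : Fin dS' × Fin d, Complex.normSq (χ z) := by
        intro a
        rw [Fintype.sum_prod_type]
        rw [Finset.sum_eq_single a]
        · rw [Finset.mul_sum]
          refine Finset.sum_congr rfl fun z _ => ?_
          rw [hψv]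
          simp only [if_pos rfl]
          exact hnsq _ _ _
        · intro b _ hb
          refine Finset.sum_eq_zero fun z _ => ?_
          rw [hψv, if_neg (Ne.symm hb)]
          simp
        · simp
      rw [Finset.sum_congr rfl fun a _ => hinner a]
      rw [Finset.sum_const, Finset.card_univ, Fintype.card_fin, nsmul_eq_mul]
    rw [h1] at hnorm
    field_simp at hnorm
    linarith
  -- the twisting unitaries
  set V : Fin d → Fin d → Matrix (Fin dS' × Fin d) (Fin dS' × Fin d) ℂ :=
    fun _ k => Matrix.of fun z z' =>
      if z = z' then Complex.exp (Complex.I * (θ z.2 k : ℂ)) else 0 with hVdef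
  have hexp : ∀ (x k : Fin d),
      Complex.exp (Complex.I * (θ x k : ℂ)) *
        Complex.exp (-(Complex.I * (θ x k : ℂ))) = 1 := by
    intro x k; rw [← Complex.exp_add]; simp
  have hconj : ∀ (x k : Fin d),
      star (Complex.exp (Complex.I * (θ x k : ℂ)))
        = Complex.exp (-(Complex.I * (θ x k : ℂ))) := by
    intro x k
    rw [Complex.star_def, ← Complex.exp_conj]
    congr 1
    simp [Complex.conj_ofReal]
  have hVunit : ∀ j k, V j k ∈ Matrix.unitaryGroup (Fin dS' × Fin d) ℂ := by
    intro j k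
    rw [Matrix.mem_unitaryGroup_iff]
    ext p q
    simp only [Matrix.mul_apply, Matrix.star_apply, hVdef, Matrix.of_apply, Matrix.one_apply]
    rw [Finset.sum_eq_single p]
    · by_cases h : p = q
      · subst h
        simp only [if_true, eq_self_iff_true, if_pos rfl]
        rw [hconj]
        exact hexp _ _
      · rw [if_pos rfl, if_neg fun hh => h hh.symm, if_neg h]
        simp
    · intro r _ hr
      rw [if_neg fun hh => hr hh.symm, zero_mul]
    · simp
  set U : Matrix (Fin d × (Fin d × (Fin dS' × Fin d)))
      (Fin d × (Fin d × (Fin dS' × Fin d))) ℂ :=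
    ∑ j, ∑ k, stdProj j ⊗ₖ (stdProj k ⊗ₖ V j k) with hUdef
  set w : Fin d × (Fin d × (Fin dS' × Fin d)) → ℂ :=
    fun P => maxEntVec d (P.1, P.2.1) * χ P.2.2 with hwdef
  have hUw : U.mulVec w = ψv := by
    funext P
    obtain ⟨a, b, z⟩ := P
    show ∑ Q, U (a,(b,z)) Q * w Q = _
    rw [Finset.sum_eq_single (a,(b,z))]
    · rw [hUdef, aux_kron3_apply, if_pos ⟨rfl, rfl⟩, hVdef]
      simp only [Matrix.of_apply, if_pos rfl]
      rw [hψv]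
      by_cases h : a = b
      · rw [if_pos h, hwdef]
        simp only [maxEntVec, if_pos h]
        subst h
        simp only [if_true, eq_self_iff_true]
        ring
      · rw [if_neg h, hwdef]
        simp only [maxEntVec]
        rw [if_neg h]
        simp
    · intro Q _ hQ
      obtain ⟨a', b', z'⟩ := Q
      rw [hUdef, aux_kron3_apply]
      by_cases h1 : a = a'
      · by_cases h2 : b = b'
        · by_cases h3 : z = z'
          · exact absurd (by rw [h1, h2, h3]) hQ
          · rw [if_pos ⟨h1, h2⟩, hVdef]
            simp only [Matrix.of_apply]
            rw [if_neg h3, zero_mul]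
        · rw [if_neg fun h => h2 h.2, zero_mul]
      · rw [if_neg fun h => h1 h.1, zero_mul]
    · simp
  constructor
  · -- exact private state
    refine ⟨U, Matrix.vecMulVec χ (star χ), ⟨V, hVunit, hUdef⟩, ?_, ?_⟩
    · constructor
      · exact aux_vecMulVec_posSemidef χ
      · have : (Matrix.vecMulVec χ (star χ)).trace
            = ∑ z, (Complex.normSq (χ z) : ℂ) := by
          rw [Matrix.trace]
          refine Finset.sum_congr rfl fun z _ => ?_
          simp [Matrix.vecMulVec_apply, Matrix.diag, Complex.mul_conj]
        rw [this, ← Complex.ofReal_sum, hχnorm, Complex.ofReal_one]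
    · have hM : (Matrix.reindex (Equiv.prodAssoc (Fin d) (Fin d) (Fin dS' × Fin d))
          (Equiv.prodAssoc (Fin d) (Fin d) (Fin dS' × Fin d))
          (maxEnt d ⊗ₖ Matrix.vecMulVec χ (star χ)))
          = Matrix.vecMulVec w (star w) := by
        ext P Q
        obtain ⟨a, b, z⟩ := P
        obtain ⟨a', b', z'⟩ := Q
        simp only [Matrix.reindex_apply, Matrix.submatrix_apply, Equiv.prodAssoc_symm_apply,
          Matrix.kroneckerMap_apply, maxEnt, Matrix.vecMulVec_apply, Pi.star_apply, hwdef]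
        rw [star_mul']
        ring
      rw [hM, aux_conj_vecMulVec, hUw]
  · -- the twisting by W
    refine ⟨χ, hχnorm, ?_⟩
    funext P
    obtain ⟨a, b, s, x⟩ := P
    show ∑ Q, _ * ψv Q = _
    rw [Finset.sum_eq_single (a,(b,(s,x)))]
    · rw [aux_W_apply, if_pos ⟨rfl, rfl, rfl, rfl⟩, hψv]
      by_cases h : a = b
      · rw [if_pos h, h]
        simp only [maxEntVec, if_pos rfl]
        have h1 : Complex.exp (-(Complex.I * (θ x b : ℂ))) *
            ((Real.sqrt d : ℂ)⁻¹ * Complex.exp (Complex.I * (θ x b : ℂ)) * η x s)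
            = Complex.exp (Complex.I * (θ x b : ℂ)) *
              Complex.exp (-(Complex.I * (θ x b : ℂ))) * ((Real.sqrt d : ℂ)⁻¹ * η x s) := by
          ring
        rw [h1, hexp, one_mul]
        simp only [if_true, hχdef]
      · rw [if_neg h]
        simp only [maxEntVec]
        rw [if_neg h]
        simp
    · intro Q _ hQ
      obtain ⟨a', b', s', x'⟩ := Q
      rw [aux_W_apply]
      have : ¬(a = a' ∧ b = b' ∧ s = s' ∧ x = x') := by
        rintro ⟨h1, h2, h3, h4⟩
        exact hQ (by rw [h1, h2, h3, h4])
      rw [if_neg this, zero_mul]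
    · simp
end
end

section
/- Coherent information identity (used in the proof of Corollary 1): Let |ψ⟩^{ABE} be any unit vector in ℂ^{d_A} ⊗ ℂ^{d_B} ⊗ ℂ^{d_E} with reduced density operators ρ^{AB}, ρ^{B}, ρ^{AE}, etc. Then I_c(A⟩B) = I(Z^A:B) − I(Z^A:E), where Z^A denotes the standard-basis measurement on A, I(Z^A:B) and I(Z^A:E) are the Holevo quantities computed from ρ^{AB} and ρ^{AE} respectively, and I_c(A⟩B) = S(ρ^B) − S(ρ^{AB}). -/
open Matrix Complex BigOperators Finset
open Kronecker
open scoped ComplexOrder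

noncomputable section

section AuxCoherent
open Polynomial
section
variable {m n : Type*} [Fintype m] [DecidableEq m] [Fintype n] [DecidableEq n]

lemma aux_charpoly_mul_comm_pow (M : Matrix m n ℂ) (N : Matrix n m ℂ) :
    (X : ℂ[X]) ^ Fintype.card n * (M * N).charpoly
      = (X : ℂ[X]) ^ Fintype.card m * (N * M).charpoly := by
  classical
  set A : Matrix m n ℂ[X] := M.map C with hA
  set B : Matrix n m ℂ[X] := N.map C with hB
  set Sm : Matrix m m ℂ[X] := Matrix.scalar m (X : ℂ[X]) with hSm
  set Sn : Matrix n n ℂ[X] := Matrix.scalar n (X : ℂ[X]) with hSn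
  have hdm : Sm.det = (X : ℂ[X]) ^ Fintype.card m := by
    rw [hSm, Matrix.scalar_apply, det_diagonal]
    simp [Finset.card_univ]
  have hdn : Sn.det = (X : ℂ[X]) ^ Fintype.card n := by
    rw [hSn, Matrix.scalar_apply, det_diagonal]
    simp [Finset.card_univ]
  have hcm : (M * N).charmatrix = Sm - A * B := by
    rw [charmatrix]
    congr 1
    simp [hA, hB, Matrix.map_mul]
  have hcn : (N * M).charmatrix = Sn - B * A := by
    rw [charmatrix]
    congr 1
    simp [hA, hB, Matrix.map_mul]
  have hASn : A * Sn = Sm * A := by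
    ext i j
    rw [hSn, hSm, Matrix.scalar_apply, Matrix.mul_diagonal, Matrix.scalar_apply,
      Matrix.diagonal_mul, mul_comm]
  have key :
      (Matrix.fromBlocks 1 A 0 1 : Matrix (m ⊕ n) (m ⊕ n) ℂ[X]) *
        Matrix.fromBlocks (Sm - A * B) 0 B Sn
      = Matrix.fromBlocks Sm 0 B (Sn - B * A) *
        Matrix.fromBlocks 1 A 0 1 := by
    rw [Matrix.fromBlocks_multiply, Matrix.fromBlocks_multiply]
    simp [Matrix.mul_sub, Matrix.sub_mul, hASn]
  have hdet := congrArg Matrix.det key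
  rw [det_mul, det_mul, Matrix.det_fromBlocks_zero₂₁, Matrix.det_fromBlocks_zero₁₂,
    Matrix.det_fromBlocks_zero₁₂] at hdet
  simp only [det_one, one_mul, mul_one] at hdet
  rw [hdn, hdm] at hdet
  rw [Matrix.charpoly, Matrix.charpoly, hcm, hcn]
  linear_combination hdet

lemma aux_charpoly_transpose (A : Matrix m m ℂ) : Aᵀ.charpoly = A.charpoly := by
  rw [Matrix.charpoly, Matrix.charpoly, ← Matrix.det_transpose (charmatrix A)]
  congr 1
  ext i j
  by_cases h : i = j
  · subst h; simp
  · simp [h, Ne.symm h]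

lemma aux_charpoly_unitary_conj (U : Matrix m m ℂ) (hU : U ∈ Matrix.unitaryGroup m ℂ)
    (A : Matrix m m ℂ) : (star U * A * U).charpoly = A.charpoly := by
  have hsU : star U * U = 1 := Unitary.coe_star_mul_self ⟨U, hU⟩
  have hcomm : ∀ B : Matrix m m ℂ[X], B * Matrix.scalar m (X : ℂ[X]) = Matrix.scalar m X * B :=
    fun B => ((Matrix.scalar_commute (X : ℂ[X]) (fun r => mul_comm _ _) B)).symm
  have hmap1 : ((star U).map (C : ℂ →+* ℂ[X])) * U.map C = 1 := by
    rw [← Matrix.map_mul, hsU, Matrix.map_one _ (map_zero C) (map_one C)]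
  have hch : (star U * A * U).charmatrix
      = (star U).map C * A.charmatrix * U.map C := by
    rw [charmatrix, charmatrix]
    simp only [RingHom.mapMatrix_apply]
    rw [Matrix.mul_sub, Matrix.sub_mul]
    congr 1
    · rw [mul_assoc, ← hcomm (U.map C), ← mul_assoc, hmap1, one_mul]
    · simp [Matrix.map_mul, mul_assoc]
  rw [Matrix.charpoly, Matrix.charpoly, hch, det_mul, det_mul]
  have hUs : U * star U = 1 := Unitary.coe_mul_star_self ⟨U, hU⟩
  rw [mul_right_comm, mul_comm ((star U).map C).det, ← det_mul, ← Matrix.map_mul, hUs,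
    Matrix.map_one _ (map_zero C) (map_one C), det_one, one_mul]

lemma aux_herm_charpoly (A : Matrix m m ℂ) (hA : A.IsHermitian) :
    A.charpoly = (Multiset.map (fun z : ℂ => X - C z)
      ((Finset.univ.val.map hA.eigenvalues).map (fun r : ℝ => (r : ℂ)))).prod := by
  have hU : star (hA.eigenvectorUnitary : Matrix m m ℂ) * A * (hA.eigenvectorUnitary : Matrix m m ℂ)
      = diagonal (RCLike.ofReal ∘ hA.eigenvalues) := by
    simpa using hA.conjStarAlgAut_star_eigenvectorUnitary
  have h1 := aux_charpoly_unitary_conj (hA.eigenvectorUnitary : Matrix m m ℂ)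
    (hA.eigenvectorUnitary).2 A
  rw [← h1, hU]
  have hd : (diagonal (RCLike.ofReal ∘ hA.eigenvalues) : Matrix m m ℂ).charmatrix
      = diagonal (fun i => X - C ((hA.eigenvalues i : ℝ) : ℂ)) := by
    ext i j
    by_cases h : i = j
    · subst h; simp
    · simp [h]
  rw [Matrix.charpoly, hd, det_diagonal, Multiset.map_map, Multiset.map_map,
    Finset.prod_eq_multiset_prod]
  rfl

lemma aux_vonNeumann_eq_of_charpoly (A : Matrix m m ℂ) (B : Matrix n n ℂ)
    (hA : A.IsHermitian) (hB : B.IsHermitian)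
    (h : (X : ℂ[X]) ^ Fintype.card n * A.charpoly
        = (X : ℂ[X]) ^ Fintype.card m * B.charpoly) :
    vonNeumann A = vonNeumann B := by
  have hmA : A.charpoly ≠ 0 := (Matrix.charpoly_monic A).ne_zero
  have hmB : B.charpoly ≠ 0 := (Matrix.charpoly_monic B).ne_zero
  have hX : (X : ℂ[X]) ^ Fintype.card n ≠ 0 := pow_ne_zero _ X_ne_zero
  have hX' : (X : ℂ[X]) ^ Fintype.card m ≠ 0 := pow_ne_zero _ X_ne_zero
  have hroots := congrArg Polynomial.roots h
  rw [Polynomial.roots_mul (mul_ne_zero hX hmA), Polynomial.roots_mul (mul_ne_zero hX' hmB),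
    Polynomial.roots_pow, Polynomial.roots_pow, Polynomial.roots_X] at hroots
  rw [aux_herm_charpoly A hA, aux_herm_charpoly B hB,
    Polynomial.roots_multiset_prod_X_sub_C, Polynomial.roots_multiset_prod_X_sub_C] at hroots
  have hsum := congrArg (fun s : Multiset ℂ => (s.map (fun z : ℂ => negMulLog2 z.re)).sum) hroots
  have hzero : negMulLog2 0 = 0 := by simp [negMulLog2]
  simp only [Multiset.map_add, Multiset.sum_add, Multiset.nsmul_singleton,
    Multiset.map_replicate, Multiset.sum_replicate, Complex.zero_re, hzero, smul_zero,
    zero_add, Multiset.map_map, Function.comp_def, Complex.ofReal_re] at hsum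
  rw [vonNeumann, vonNeumann, dif_pos hA, dif_pos hB,
    Finset.sum_eq_multiset_sum, Finset.sum_eq_multiset_sum]
  exact hsum

lemma aux_vn_gram (M : Matrix m n ℂ) :
    vonNeumann (M * Mᴴ) = vonNeumann (Mᵀ * Mᵀᴴ) := by
  have h1 : Mᵀ * Mᵀᴴ = (Mᴴ * M)ᵀ := by
    ext i j
    simp [Matrix.mul_apply, mul_comm]
  refine aux_vonNeumann_eq_of_charpoly _ _ (Matrix.isHermitian_mul_conjTranspose_self M)
    (by rw [h1]; exact (Matrix.isHermitian_conjTranspose_mul_self M).transpose) ?_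
  rw [h1, aux_charpoly_transpose]
  exact aux_charpoly_mul_comm_pow M Mᴴ

end
-- helper: condStateVec at std basis
lemma condStateVec_stdVec {ι β : Type*} [Fintype ι] [DecidableEq ι] [Fintype β]
    (a : ι) (ρ : Matrix (ι × β) (ι × β) ℂ) :
    condStateVec (stdVec a) ρ = Matrix.of fun w w' => ρ (a, w) (a, w') := by
  ext w w'
  simp [condStateVec, stdVec, apply_ite, Finset.sum_ite_eq', mul_comm]

end AuxCoherent

/-- **Coherent information identity (used in the proof of Corollary 1).**
For any pure tripartite state |ψ⟩^{ABE},
I_c(A⟩B) = S(B) - S(AB) = I(Z^A:B) - I(Z^A:E). -/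
theorem coherent_info_identity
    {dA dB dE : ℕ}
    (v : Fin dA × (Fin dB × Fin dE) → ℂ)
    (hv : ∑ P, Complex.normSq (v P) = 1) :
    vonNeumann (Matrix.of fun b b' : Fin dB =>
        ∑ a, ∑ e, v (a, (b, e)) * star (v (a, (b', e))))
      - vonNeumann (Matrix.of fun P Q : Fin dA × Fin dB =>
        ∑ e, v (P.1, (P.2, e)) * star (v (Q.1, (Q.2, e))))
    = holevoB stdVec (Matrix.of fun P Q : Fin dA × Fin dB =>
        ∑ e, v (P.1, (P.2, e)) * star (v (Q.1, (Q.2, e))))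
      - holevoB stdVec (Matrix.of fun P Q : Fin dA × Fin dE =>
        ∑ b, v (P.1, (b, P.2)) * star (v (Q.1, (b, Q.2)))) := by
  classical
  set ρAB : Matrix (Fin dA × Fin dB) (Fin dA × Fin dB) ℂ :=
    Matrix.of fun P Q => ∑ e, v (P.1, (P.2, e)) * star (v (Q.1, (Q.2, e))) with hρAB
  set ρAE : Matrix (Fin dA × Fin dE) (Fin dA × Fin dE) ℂ :=
    Matrix.of fun P Q => ∑ b, v (P.1, (b, P.2)) * star (v (Q.1, (b, Q.2))) with hρAE
  -- per-outcome matrices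
  set Ma : Fin dA → Matrix (Fin dB) (Fin dE) ℂ :=
    fun a => Matrix.of fun b e => v (a, (b, e)) with hMa
  have hσB : ∀ a, condStateVec (stdVec a) ρAB = Ma a * (Ma a)ᴴ := by
    intro a
    rw [condStateVec_stdVec]
    ext b b'
    simp [hρAB, hMa, Matrix.mul_apply]
  have hσE : ∀ a, condStateVec (stdVec a) ρAE = (Ma a)ᵀ * ((Ma a)ᵀ)ᴴ := by
    intro a
    rw [condStateVec_stdVec]
    ext e e'
    simp [hρAE, hMa, Matrix.mul_apply]
  have htrval : ∀ a, (Ma a * (Ma a)ᴴ).trace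
      = ((∑ b, ∑ e, Complex.normSq (v (a, (b, e))) : ℝ) : ℂ) := by
    intro a
    push_cast
    simp [Matrix.trace, Matrix.diag, Matrix.mul_apply, hMa, Complex.mul_conj]
  have htrMa : ∀ a, ((Ma a)ᵀ * ((Ma a)ᵀ)ᴴ).trace = (Ma a * (Ma a)ᴴ).trace := by
    intro a
    rw [Matrix.trace_mul_comm]
    have h : ((Ma a)ᵀ)ᴴ * (Ma a)ᵀ = (Ma a * (Ma a)ᴴ)ᵀ := by
      ext i j
      simp [Matrix.mul_apply, mul_comm]
    rw [h, Matrix.trace_transpose]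
  have htr : ∀ a, (condStateVec (stdVec a) ρAE).trace = (condStateVec (stdVec a) ρAB).trace := by
    intro a
    rw [hσB, hσE, htrMa]
  have hterm : ∀ a : Fin dA,
      measProb (stdVec a) ρAB *
        vonNeumann (((condStateVec (stdVec a) ρAB).trace)⁻¹ • condStateVec (stdVec a) ρAB)
      = measProb (stdVec a) ρAE *
        vonNeumann (((condStateVec (stdVec a) ρAE).trace)⁻¹ • condStateVec (stdVec a) ρAE) := by
    intro a
    have hmp : measProb (stdVec a) ρAE = measProb (stdVec a) ρAB := by
      unfold measProb
      rw [htr a]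
    rw [hmp]
    set t : ℝ := ∑ b, ∑ e, Complex.normSq (v (a, (b, e))) with ht
    have htnn : 0 ≤ t := Finset.sum_nonneg fun b _ => Finset.sum_nonneg fun e _ => Complex.normSq_nonneg _
    by_cases h0 : t = 0
    · have hz : measProb (stdVec a) ρAB = 0 := by
        unfold measProb
        rw [hσB a, htrval a, ← ht, h0]
        simp
      rw [hz, zero_mul, zero_mul]
    · congr 1
      rw [hσB a, hσE a, htrMa a, htrval a, ← ht]
      set c : ℝ := Real.sqrt t⁻¹ with hc
      have hc2 : (c : ℂ) * (c : ℂ) = ((t⁻¹ : ℝ) : ℂ) := by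
        rw [← Complex.ofReal_mul, Real.mul_self_sqrt (inv_nonneg.mpr htnn)]
      have e1 : ((t : ℂ))⁻¹ • (Ma a * (Ma a)ᴴ)
          = ((c : ℂ) • Ma a) * (((c : ℂ) • Ma a))ᴴ := by
        rw [Matrix.conjTranspose_smul, Complex.star_def, Complex.conj_ofReal,
          Matrix.smul_mul, Matrix.mul_smul, smul_smul, hc2, Complex.ofReal_inv]
      have e2 : ((t : ℂ))⁻¹ • ((Ma a)ᵀ * ((Ma a)ᵀ)ᴴ)
          = ((c : ℂ) • Ma a)ᵀ * ((((c : ℂ) • Ma a))ᵀ)ᴴ := by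
        rw [Matrix.transpose_smul, Matrix.conjTranspose_smul, Complex.star_def,
          Complex.conj_ofReal, Matrix.smul_mul, Matrix.mul_smul, smul_smul, hc2,
          Complex.ofReal_inv]
      rw [e1, e2]
      exact aux_vn_gram ((c : ℂ) • Ma a)
  set G : Matrix (Fin dA × Fin dB) (Fin dE) ℂ :=
    Matrix.of fun P e => v (P.1, (P.2, e)) with hG
  have hG1 : ρAB = G * Gᴴ := by
    ext P Q
    simp [hρAB, hG, Matrix.mul_apply]
  have hG2 : (∑ a, condStateVec (stdVec a) ρAE) = Gᵀ * Gᵀᴴ := by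
    ext e e'
    simp only [Matrix.sum_apply, Matrix.mul_apply, Matrix.transpose_apply,
      Matrix.conjTranspose_apply]
    rw [Fintype.sum_prod_type]
    refine Finset.sum_congr rfl fun a _ => ?_
    rw [hσE a]
    simp [Matrix.mul_apply, hG, hMa]
  have hB1 : (Matrix.of fun b b' : Fin dB =>
      ∑ a, ∑ e, v (a, (b, e)) * star (v (a, (b', e))))
      = ∑ a, condStateVec (stdVec a) ρAB := by
    ext b b'
    simp [Matrix.sum_apply, condStateVec_stdVec, hρAB]
  have hvnE : vonNeumann ρAB = vonNeumann (∑ a, condStateVec (stdVec a) ρAE) := by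
    rw [hG1, hG2]
    exact aux_vn_gram G
  unfold holevoB
  rw [hB1]
  have hS : (∑ x, measProb (stdVec x) ρAB *
        vonNeumann (((condStateVec (stdVec x) ρAB).trace)⁻¹ • condStateVec (stdVec x) ρAB))
      = ∑ x, measProb (stdVec x) ρAE *
        vonNeumann (((condStateVec (stdVec x) ρAE).trace)⁻¹ • condStateVec (stdVec x) ρAE) :=
    Finset.sum_congr rfl fun x _ => hterm x
  rw [hS, hvnE]
  ring
end
end
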